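/- arXiv:0704.2838 — 2 statements merged into one kernel-verified Lean document; each statement's English description precedes it below -/
import Mathlib

section
/- The 3-dimensional subspace W = span(ṽ_0, ṽ_1, ṽ_2) of ℂ³⊗ℂ³ is invariant under the six operators Δ(X_0^+), Δ(X_0^-), Δ(X_1^+), Δ(X_1^-), Δ(K_0), Δ(K_1), and the linear isomorphism W → ℂ³ sending ṽ_r to w_r (r = 0,1,2) intertwines these operators with the representation ρ_{−aq}: explicitly, Δ(X_0^-)ṽ_0 = ṽ_1, Δ(X_0^-)ṽ_1 = ṽ_2, Δ(X_0^-)ṽ_2 = 0; Δ(X_0^+)ṽ_0 = 0, Δ(X_0^+)ṽ_1 = [2]_t ṽ_0, Δ(X_0^+)ṽ_2 = [2]_t ṽ_1; Δ(K_0)ṽ_0 = qṽ_0, Δ(K_0)ṽ_1 = ṽ_1, Δ(K_0)ṽ_2 = q^{-1}ṽ_2; Δ(X_1^+)ṽ_0 = [4]_t^{-1}·q·(−aq)(1+q²)·ṽ_2 and Δ(X_1^+)ṽ_1 = Δ(X_1^+)ṽ_2 = 0; Δ(X_1^-)ṽ_2 = [4]_t^{-1}·q^{-1}·[2]_t²·(−aq)^{-1}(1+q^{-2})·ṽ_0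 and Δ(X_1^-)ṽ_0 = Δ(X_1^-)ṽ_1 = 0; Δ(K_1)ṽ_0 = q^{-2}ṽ_0, Δ(K_1)ṽ_1 = ṽ_1, Δ(K_1)ṽ_2 = q²ṽ_2. In particular, the tensor product V_{aq²}⊗V_a of fundamental representations of the twisted quantum loop algebra of type A_2^{(2)} has a subrepresentation isomorphic to V_{−aq} (the key step in the computation of the twisted q-character of the Kirillov–Reshetikhin module W_{2,a}). -/
noncomputable section

open Kronecker

/-- The t-integer `[n]_t = (tⁿ - t⁻ⁿ)/(t - t⁻¹)`. -/
def tnum (t : ℂ) (n : ℕ) : ℂ := (t ^ n - t⁻¹ ^ n) / (t - t⁻¹)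

/-- The operator `X₀⁺` of the fundamental representation `ρ_c` on `ℂ³`. -/
def X0p (t : ℂ) : Matrix (Fin 3) (Fin 3) ℂ :=
  !![0, tnum t 2, 0; 0, 0, tnum t 2; 0, 0, 0]

/-- The operator `X₀⁻` of the fundamental representation `ρ_c` on `ℂ³`. -/
def X0m : Matrix (Fin 3) (Fin 3) ℂ :=
  !![0, 0, 0; 1, 0, 0; 0, 1, 0]

/-- The operator `K₀ = diag(q, 1, q⁻¹)`, with `q = t²`. -/
def K0 (t : ℂ) : Matrix (Fin 3) (Fin 3) ℂ :=
  !![t ^ 2, 0, 0; 0, 1, 0; 0, 0, (t ^ 2)⁻¹]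

/-- The operator `X₁⁺` of the fundamental representation `ρ_c` on `ℂ³`. -/
def X1p (t c : ℂ) : Matrix (Fin 3) (Fin 3) ℂ :=
  !![0, 0, 0; 0, 0, 0; (tnum t 4)⁻¹ * t ^ 2 * c * (1 + (t ^ 2) ^ 2), 0, 0]

/-- The operator `X₁⁻` of the fundamental representation `ρ_c` on `ℂ³`. -/
def X1m (t c : ℂ) : Matrix (Fin 3) (Fin 3) ℂ :=
  !![0, 0, (tnum t 4)⁻¹ * (t ^ 2)⁻¹ * (tnum t 2) ^ 2 * c⁻¹ * (1 + ((t ^ 2)⁻¹) ^ 2);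
     0, 0, 0; 0, 0, 0]

/-- The operator `K₁ = diag(q⁻², 1, q²)`, with `q = t²`. -/
def K1 (t : ℂ) : Matrix (Fin 3) (Fin 3) ℂ :=
  !![((t ^ 2) ^ 2)⁻¹, 0, 0; 0, 1, 0; 0, 0, (t ^ 2) ^ 2]

/-- Basis vectors of `ℂ³`. -/
def e (i : Fin 3) : Fin 3 → ℂ := Pi.single i 1

/-- The tensor product of two vectors of `ℂ³`, as a vector of `ℂ³ ⊗ ℂ³ ≅ ℂ^{3×3}`. -/
def tp (v w : Fin 3 → ℂ) : Fin 3 × Fin 3 → ℂ := fun p => v p.1 * w p.2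

/-- `Δ(K₀) = K₀ ⊗ K₀` acting on `V_{aq²} ⊗ V_a`. -/
def DK0 (t : ℂ) : Matrix (Fin 3 × Fin 3) (Fin 3 × Fin 3) ℂ := K0 t ⊗ₖ K0 t

/-- `Δ(K₁) = K₁ ⊗ K₁` acting on `V_{aq²} ⊗ V_a`. -/
def DK1 (t : ℂ) : Matrix (Fin 3 × Fin 3) (Fin 3 × Fin 3) ℂ := K1 t ⊗ₖ K1 t

/-- `Δ(X₀⁺) = X₀⁺ ⊗ 1 + K₀ ⊗ X₀⁺` acting on `V_{aq²} ⊗ V_a`. -/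
def DX0p (t : ℂ) : Matrix (Fin 3 × Fin 3) (Fin 3 × Fin 3) ℂ :=
  X0p t ⊗ₖ (1 : Matrix (Fin 3) (Fin 3) ℂ) + K0 t ⊗ₖ X0p t

/-- `Δ(X₀⁻) = X₀⁻ ⊗ K₀⁻¹ + 1 ⊗ X₀⁻` acting on `V_{aq²} ⊗ V_a`. -/
def DX0m (t : ℂ) : Matrix (Fin 3 × Fin 3) (Fin 3 × Fin 3) ℂ :=
  X0m ⊗ₖ (K0 t)⁻¹ + (1 : Matrix (Fin 3) (Fin 3) ℂ) ⊗ₖ X0m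

/-- `Δ(X₁⁺) = X₁⁺ ⊗ 1 + K₁ ⊗ X₁⁺` acting on `V_{aq²} ⊗ V_a`
(the first factor carries `ρ_{aq²}`, the second `ρ_a`). -/
def DX1p (t a : ℂ) : Matrix (Fin 3 × Fin 3) (Fin 3 × Fin 3) ℂ :=
  X1p t (a * (t ^ 2) ^ 2) ⊗ₖ (1 : Matrix (Fin 3) (Fin 3) ℂ) + K1 t ⊗ₖ X1p t a

/-- `Δ(X₁⁻) = X₁⁻ ⊗ K₁⁻¹ + 1 ⊗ X₁⁻` acting on `V_{aq²} ⊗ V_a`. -/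
def DX1m (t a : ℂ) : Matrix (Fin 3 × Fin 3) (Fin 3 × Fin 3) ℂ :=
  X1m t (a * (t ^ 2) ^ 2) ⊗ₖ (K1 t)⁻¹ + (1 : Matrix (Fin 3) (Fin 3) ℂ) ⊗ₖ X1m t a

/-- `ṽ₀ = v₀⊗v'₁ − q·v₁⊗v'₀`. -/
def w0 (t : ℂ) : Fin 3 × Fin 3 → ℂ := tp (e 0) (e 1) - t ^ 2 • tp (e 1) (e 0)

/-- `ṽ₁ = (1−q)·v₁⊗v'₁ + v₀⊗v'₂ − v₂⊗v'₀`. -/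
def w1 (t : ℂ) : Fin 3 × Fin 3 → ℂ :=
  (1 - t ^ 2) • tp (e 1) (e 1) + tp (e 0) (e 2) - tp (e 2) (e 0)

/-- `ṽ₂ = v₁⊗v'₂ − q·v₂⊗v'₁`. -/
def w2 (t : ℂ) : Fin 3 × Fin 3 → ℂ := tp (e 1) (e 2) - t ^ 2 • tp (e 2) (e 1)

set_option maxHeartbeats 4000000 in
/-- The span of `ṽ₀, ṽ₁, ṽ₂` in `V_{aq²} ⊗ V_a` is invariant under the coproduct
operators, and `ṽ_r ↦ w_r` intertwines them with the fundamental representation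
`ρ_{-aq}`: the tensor product `V_{aq²} ⊗ V_a` has a subrepresentation isomorphic to
`V_{-aq}`. -/
theorem subrep_Vmaq (t : ℂ) (ht0 : t ≠ 0) (ht : ∀ n : ℕ, 0 < n → t ^ n ≠ 1)
    (a : ℂ) (ha : a ≠ 0) :
    (DX0m t).mulVec (w0 t) = w1 t
    ∧ (DX0m t).mulVec (w1 t) = w2 t
    ∧ (DX0m t).mulVec (w2 t) = 0
    ∧ (DX0p t).mulVec (w0 t) = 0
    ∧ (DX0p t).mulVec (w1 t) = tnum t 2 • w0 t
    ∧ (DX0p t).mulVec (w2 t) = tnum t 2 • w1 t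
    ∧ (DK0 t).mulVec (w0 t) = t ^ 2 • w0 t
    ∧ (DK0 t).mulVec (w1 t) = w1 t
    ∧ (DK0 t).mulVec (w2 t) = (t ^ 2)⁻¹ • w2 t
    ∧ (DX1p t a).mulVec (w0 t) =
        ((tnum t 4)⁻¹ * t ^ 2 * (-(a * t ^ 2)) * (1 + (t ^ 2) ^ 2)) • w2 t
    ∧ (DX1p t a).mulVec (w1 t) = 0
    ∧ (DX1p t a).mulVec (w2 t) = 0
    ∧ (DX1m t a).mulVec (w2 t) =
        ((tnum t 4)⁻¹ * (t ^ 2)⁻¹ * (tnum t 2) ^ 2 * (-(a * t ^ 2))⁻¹ *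
          (1 + ((t ^ 2)⁻¹) ^ 2)) • w0 t
    ∧ (DX1m t a).mulVec (w0 t) = 0
    ∧ (DX1m t a).mulVec (w1 t) = 0
    ∧ (DK1 t).mulVec (w0 t) = ((t ^ 2) ^ 2)⁻¹ • w0 t
    ∧ (DK1 t).mulVec (w1 t) = w1 t
    ∧ (DK1 t).mulVec (w2 t) = (t ^ 2) ^ 2 • w2 t := by

  have h2 : t ^ 2 ≠ 0 := pow_ne_zero _ ht0
  have htt : t - t⁻¹ ≠ 0 := by
    intro h
    have h1 : t = t⁻¹ := sub_eq_zero.mp h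
    have h2' : t ^ 2 = 1 := by
      rw [pow_two]; nth_rewrite 2 [h1]; exact mul_inv_cancel₀ ht0
    exact ht 2 two_pos h2'
  have hnum : ∀ n : ℕ, 0 < n → tnum t n ≠ 0 := by
    intro n hn
    unfold tnum
    apply div_ne_zero _ htt
    intro h
    have h1 : t ^ n = t⁻¹ ^ n := sub_eq_zero.mp h
    have h2' : t ^ (2 * n) = 1 := by
      rw [two_mul, pow_add]
      nth_rewrite 2 [h1]
      rw [inv_pow, mul_inv_cancel₀ (pow_ne_zero _ ht0)]
    exact ht (2 * n) (by positivity) h2'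
  have hn2 : tnum t 2 ≠ 0 := hnum 2 two_pos
  have hn4 : tnum t 4 ≠ 0 := hnum 4 (by norm_num)
  have hcomb : t⁻¹ ^ 16 * (tnum t 4)⁻¹ ^ 2 * a⁻¹ ^ 2 *
      (t ^ 16 * tnum t 4 ^ 2 * a ^ 2) = 1 := by
    field_simp
  have hK0 : (K0 t)⁻¹ = !![(t ^ 2)⁻¹, 0, 0; 0, 1, 0; 0, 0, t ^ 2] := by
    apply Matrix.inv_eq_right_inv
    ext i j
    fin_cases i <;> fin_cases j <;>
      simp [K0, Matrix.mul_apply, Fin.sum_univ_three, h2, Matrix.one_apply,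
        Matrix.vecHead, Matrix.vecTail]
  have hK1 : (K1 t)⁻¹ = !![(t ^ 2) ^ 2, 0, 0; 0, 1, 0; 0, 0, ((t ^ 2) ^ 2)⁻¹] := by
    apply Matrix.inv_eq_right_inv
    ext i j
    fin_cases i <;> fin_cases j <;>
      simp [K1, Matrix.mul_apply, Fin.sum_univ_three, h2, Matrix.one_apply,
        Matrix.vecHead, Matrix.vecTail]
  refine ⟨?_, ?_, ?_, ?_, ?_, ?_, ?_, ?_, ?_, ?_, ?_, ?_, ?_, ?_, ?_, ?_, ?_, ?_⟩ <;>
    · funext p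
      obtain ⟨i, j⟩ := p
      simp only [DX0m, DX0p, DX1m, DX1p, DK0, DK1, hK0, hK1]
      fin_cases i <;> fin_cases j <;>
        simp [X0m, X0p, X1m, X1p, K0, K1,
          w0, w1, w2, tp, e, Matrix.mulVec, Matrix.kroneckerMap_apply, Matrix.one_apply,
          Fintype.sum_prod_type, Fin.sum_univ_three, Pi.single_apply, dotProduct, Matrix.vecHead, Matrix.vecTail] <;>
        (try ring) <;> (try rw [add_eq_zero_iff_eq_neg]) <;> (try field_simp) <;>
        (try rw [div_eq_div_iff (by simp [pow_eq_zero_iff, ht0, ha, hn2, hn4])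
          (by simp [pow_eq_zero_iff, ht0, ha, hn2, hn4])]) <;>
        (try rw [div_eq_iff (by simp [pow_eq_zero_iff, ht0, ha, hn2, hn4])]) <;>
        (try rw [eq_div_iff (by simp [pow_eq_zero_iff, ht0, ha, hn2, hn4])]) <;>
        (try ring) <;>
        (try linear_combination (-(t ^ 2 + t ^ 6) * tnum t 2 ^ 2 * tnum t 4 * a) * hcomb)
end
end

section
/- For every k ≥ 1, every T ∈ Tab(1,k) and every a ∈ ℂ∖{0}, the monomial m^{(1)}_{T,a} = ∏_{p=1}^{k} ⟦T_p⟧_{aq^{2(p−1)}} is thin: z_{l,b}(m^{(1)}_{T,a}) ≤ 1 for every (l,b) ∈ {1,2}×(ℂ∖{0}). -/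
noncomputable section

/-- The set `B = {1,2,3,4,4̄,3̄,2̄,1̄}`. -/
inductive BB : Type
  | b1 | b2 | b3 | b4 | b4' | b3' | b2' | b1'
  deriving DecidableEq

instance : Fintype BB where
  elems := {.b1, .b2, .b3, .b4, .b4', .b3', .b2', .b1'}
  complete := fun x => by cases x <;> decide

/-- The rank used to define the partial order on `B`
(`4` and `4̄` get the same rank, making them incomparable). -/
def BB.rank : BB → ℕ
  | .b1 => 0 | .b2 => 1 | .b3 => 2 | .b4 => 3 | .b4' => 3
  | .b3' => 4 | .b2' => 5 | .b1' => 6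

/-- The partial order `⪯` on `B` : `1 ≺ 2 ≺ 3 ≺ 4 ≺ 3̄ ≺ 2̄ ≺ 1̄` and `3 ≺ 4̄ ≺ 3̄`,
with `4` and `4̄` incomparable. -/
def BB.le (x y : BB) : Prop := x = y ∨ x.rank < y.rank

/-- The strict order `≺` on `B`. -/
def BB.lt (x y : BB) : Prop := x.rank < y.rank

/-- Monomials: the free abelian group on `{1,2} × ℂˣ`, written additively;
`Finsupp.single (i,b) 1` corresponds to the generator `Z_{i+1,b}`. -/
abbrev Mon2 : Type := (Fin 2 × ℂˣ) →₀ ℤ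

/-- The group ring `ℤ[G]`. -/
abbrev LR2 : Type := AddMonoidAlgebra ℤ Mon2

/-- The generator `Z_{i,b}` (with `i : Fin 2` indexing `{1,2}`). -/
def Zv (i : Fin 2) (b : ℂˣ) : Mon2 := Finsupp.single (i, b) 1

/-- `j = e^{2iπ/3}`, a primitive cube root of unity, as a unit of `ℂ`. -/
def jC : ℂˣ := Units.mk0 (Complex.exp (2 * Real.pi * Complex.I / 3)) (Complex.exp_ne_zero _)

/-- The boxes `⟦α⟧_a ∈ G` for `α ∈ B` (written additively). -/
def box (q : ℂˣ) : BB → ℂˣ → Mon2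
  | .b1, a => Zv 0 a
  | .b2, a => -Zv 0 (a * q ^ 2) + Zv 1 (a ^ 3 * q ^ 3)
  | .b3, a => -Zv 1 (a ^ 3 * q ^ 9) + Zv 0 (a * q ^ 2 * jC) + Zv 0 (a * q ^ 2 * jC ^ 2)
  | .b4, a => Zv 0 (a * q ^ 2 * jC) - Zv 0 (a * q ^ 4 * jC ^ 2)
  | .b4', a => Zv 0 (a * q ^ 2 * jC ^ 2) - Zv 0 (a * q ^ 4 * jC)
  | .b3', a => -Zv 0 (a * q ^ 4 * jC) - Zv 0 (a * q ^ 4 * jC ^ 2) + Zv 1 (a ^ 3 * q ^ 9)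
  | .b2', a => Zv 0 (a * q ^ 4) - Zv 1 (a ^ 3 * q ^ 15)
  | .b1', a => -Zv 0 (a * q ^ 6)

/-- `Tab(1,k)`: sequences `(T_1,…,T_k)` in `B` with `T_p ⪯ T_{p+1}`. -/
def IsTab1 (k : ℕ) (T : Fin k → BB) : Prop :=
  ∀ (p : ℕ) (h : p + 1 < k), BB.le (T ⟨p, Nat.lt_of_succ_lt h⟩) (T ⟨p + 1, h⟩)

/-- The monomial `m^{(1)}_{T,a} = ∏_{p=1}^{k} ⟦T_p⟧_{aq^{2(p-1)}}` (written additively). -/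
def m1 (q : ℂˣ) {k : ℕ} (T : Fin k → BB) (a : ℂˣ) : Mon2 :=
  ∑ p : Fin k, box q (T p) (a * q ^ (2 * (p : ℕ)))

/-- `Tab(2,k)`: two-row arrays with entries in `B` satisfying (θ1)–(θ4).
Row `i : Fin 2` corresponds to row `i+1` of the paper. -/
def IsTab2 (k : ℕ) (T : Fin 2 → Fin k → BB) : Prop :=
  (∀ i : Fin 2, IsTab1 k (T i)) ∧
  (∀ p : Fin k, ¬ BB.le (T 1 p) (T 0 p)) ∧
  (¬ ∃ p p' : Fin k, p < p' ∧
      (∀ r : Fin k, p ≤ r → r < p' → T 0 r = BB.b3) ∧ T 0 p' = BB.b4 ∧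
      T 1 p = BB.b4 ∧ (∀ r : Fin k, p < r → r ≤ p' → T 1 r = BB.b3')) ∧
  (¬ ∃ p p' : Fin k, p < p' ∧
      (∀ r : Fin k, p ≤ r → r < p' → T 0 r = BB.b3) ∧ T 0 p' = BB.b4' ∧
      T 1 p = BB.b4' ∧ (∀ r : Fin k, p < r → r ≤ p' → T 1 r = BB.b3'))

/-- The monomial `m^{(2)}_{T,a} = ∏_{i∈{1,2}} ∏_{p=1}^{k} ⟦T_{i,p}⟧_{aq^{2(p-i)}}`
(written additively; rows and columns are 0-indexed). -/
def m2 (q : ℂˣ) {k : ℕ} (T : Fin 2 → Fin k → BB) (a : ℂˣ) : Mon2 :=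
  ∑ i : Fin 2, ∑ p : Fin k, box q (T i p) (a * q ^ (2 * ((p : ℤ) - (i : ℤ))))

section Aux
variable (q : ℂˣ)

lemma hjprim : IsPrimitiveRoot (jC : ℂ) 3 := by
  have h := Complex.isPrimitiveRoot_exp 3 (by norm_num)
  have e : (jC : ℂ) = Complex.exp (2 * Real.pi * Complex.I / ((3:ℕ) : ℂ)) := by
    norm_num [jC]
  rw [e]; exact h

lemma q_pow_inj (hq : ∀ n : ℕ, 0 < n → (q : ℂ) ^ n ≠ 1) :
    ∀ m n : ℕ, (q : ℂ) ^ m = (q : ℂ) ^ n → m = n := by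
  have key : ∀ m n : ℕ, m < n → (q : ℂ) ^ m = (q : ℂ) ^ n → False := by
    intro m n hmn h
    have hqm : (q : ℂ) ^ m ≠ 0 := pow_ne_zero _ q.ne_zero
    have h2 : (q : ℂ) ^ m * (q : ℂ) ^ (n - m) = (q : ℂ) ^ m * 1 := by
      rw [mul_one, ← pow_add, Nat.add_sub_cancel' hmn.le, h]
    exact hq (n - m) (by omega) (mul_left_cancel₀ hqm h2)
  intro m n h
  rcases lt_trichotomy m n with h' | h' | h'
  · exact (key m n h' h).elim
  · exact h'
  · exact (key n m h' h.symm).elim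

lemma key_inj (hq : ∀ n : ℕ, 0 < n → (q : ℂ) ^ n ≠ 1) (a : ℂˣ) {m n e f : ℕ}
    (he : e < 3) (hf : f < 3)
    (h : (a : ℂ) * q ^ m * jC ^ e = (a : ℂ) * q ^ n * jC ^ f) : m = n ∧ e = f := by
  have ha : (a : ℂ) ≠ 0 := a.ne_zero
  have h' : (q : ℂ) ^ m * (jC : ℂ) ^ e = (q : ℂ) ^ n * (jC : ℂ) ^ f := by
    apply mul_left_cancel₀ ha
    rw [← mul_assoc, ← mul_assoc]; exact h
  have hj3 : (jC : ℂ) ^ 3 = 1 := hjprim.pow_eq_one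
  have hcube : (q : ℂ) ^ (3 * m) = (q : ℂ) ^ (3 * n) := by
    have := congrArg (· ^ 3) h'
    simpa [mul_pow, ← pow_mul, mul_comm, pow_mul_comm', pow_right_comm,
      show ∀ x : ℕ, (jC : ℂ) ^ (x * 3) = 1 from fun x => by
        rw [mul_comm, pow_mul, hj3, one_pow]] using this
  have hmn : m = n := by
    have := q_pow_inj q hq (3 * m) (3 * n) hcube
    omega
  subst hmn
  have hef : (jC : ℂ) ^ e = (jC : ℂ) ^ f :=
    mul_left_cancel₀ (pow_ne_zero _ q.ne_zero) h'
  exact ⟨rfl, hjprim.pow_inj he hf hef⟩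

end Aux

/-- Positive-key specification for row-1 (index 0) generators. -/
def Spec0 (α : BB) (p m e : ℕ) : Prop :=
  (α = .b1 ∧ m = 2*p ∧ e = 0) ∨
  (α = .b3 ∧ m = 2*p+2 ∧ (e = 1 ∨ e = 2)) ∨
  (α = .b4 ∧ m = 2*p+2 ∧ e = 1) ∨
  (α = .b4' ∧ m = 2*p+2 ∧ e = 2) ∨
  (α = .b2' ∧ m = 2*p+4 ∧ e = 0)

/-- Positive-key specification for row-2 (index 1) generators. -/
def Spec1 (α : BB) (p m : ℕ) : Prop :=
  (α = .b2 ∧ m = 6*p+3) ∨ (α = .b3' ∧ m = 6*p+9)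

lemma box_pos (q a : ℂˣ) (α : BB) (p : ℕ) (lb : Fin 2 × ℂˣ)
    (h : 0 < (box q α (a * q ^ (2*p))) lb) :
    (∃ m e, e < 3 ∧ Spec0 α p m e ∧ lb.1 = 0 ∧ (lb.2 : ℂ) = (a : ℂ) * q ^ m * jC ^ e) ∨
    (∃ m, Spec1 α p m ∧ lb.1 = 1 ∧ (lb.2 : ℂ) = (a : ℂ) ^ 3 * q ^ m) := by
  cases α <;>
    simp only [box, Zv, Finsupp.add_apply, Finsupp.sub_apply, Finsupp.neg_apply,
      Finsupp.single_apply] at h <;>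
    split_ifs at h <;> try omega
  all_goals subst_vars
  all_goals first
    | (refine Or.inl ⟨2*p, 0, by omega, Or.inl ⟨rfl, rfl, rfl⟩, rfl, ?_⟩; push_cast; ring1)
    | (refine Or.inl ⟨2*p+2, 1, by omega, Or.inr (Or.inl ⟨rfl, rfl, Or.inl rfl⟩), rfl, ?_⟩;
        push_cast; ring1)
    | (refine Or.inl ⟨2*p+2, 2, by omega, Or.inr (Or.inl ⟨rfl, rfl, Or.inr rfl⟩), rfl, ?_⟩;
        push_cast; ring1)
    | (refine Or.inl ⟨2*p+2, 1, by omega, Or.inr (Or.inr (Or.inl ⟨rfl, rfl, rfl⟩)), rfl, ?_⟩;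
        push_cast; ring1)
    | (refine Or.inl ⟨2*p+2, 2, by omega,
        Or.inr (Or.inr (Or.inr (Or.inl ⟨rfl, rfl, rfl⟩))), rfl, ?_⟩; push_cast; ring1)
    | (refine Or.inl ⟨2*p+4, 0, by omega,
        Or.inr (Or.inr (Or.inr (Or.inr ⟨rfl, rfl, rfl⟩))), rfl, ?_⟩; push_cast; ring1)
    | (refine Or.inr ⟨6*p+3, Or.inl ⟨rfl, rfl⟩, rfl, ?_⟩; push_cast; ring1)
    | (refine Or.inr ⟨6*p+9, Or.inr ⟨rfl, rfl⟩, rfl, ?_⟩; push_cast; ring1)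
    | simp_all

lemma jC_ne_jC2 : (jC : ℂˣ) ≠ jC ^ 2 := by
  intro h
  have h' : (jC : ℂ) ^ 1 = (jC : ℂ) ^ 2 := by
    rw [pow_one]; exact_mod_cast congrArg Units.val h
  have := hjprim.pow_inj (by norm_num : (1:ℕ) < 3) (by norm_num : (2:ℕ) < 3) h'
  omega

lemma box_le_one (q : ℂˣ) (α : BB) (c : ℂˣ) (lb : Fin 2 × ℂˣ) :
    (box q α c) lb ≤ 1 := by
  cases α <;>
    simp only [box, Zv, Finsupp.add_apply, Finsupp.sub_apply, Finsupp.neg_apply,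
      Finsupp.single_apply] at * <;>
    split_ifs <;> try omega
  all_goals exfalso
  all_goals subst_vars
  all_goals rename_i hkey
  all_goals exact jC_ne_jC2 (mul_left_cancel ((Prod.ext_iff.mp hkey).2.symm))


lemma rank_mono {k : ℕ} {T : Fin k → BB} (hT : IsTab1 k T) :
    ∀ (j : ℕ) (hj : j < k) (i : ℕ) (hi : i ≤ j),
      (T ⟨i, lt_of_le_of_lt hi hj⟩).rank ≤ (T ⟨j, hj⟩).rank := by
  intro j
  induction j with
  | zero =>
    intro hj i hi
    have : i = 0 := Nat.le_zero.mp hi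
    subst this; exact le_refl _
  | succ j ih =>
    intro hj i hi
    rcases Nat.eq_or_lt_of_le hi with h | h
    · subst h; exact le_refl _
    · have h' : i ≤ j := by omega
      have step : (T ⟨j, Nat.lt_of_succ_lt hj⟩).rank ≤ (T ⟨j+1, hj⟩).rank := by
        rcases hT j hj with he | hlt
        · rw [he]
        · exact le_of_lt hlt
      exact le_trans (ih (Nat.lt_of_succ_lt hj) i h') step

lemma no_two_pos (q : ℂˣ) (hq : ∀ n : ℕ, 0 < n → (q : ℂ) ^ n ≠ 1)
    {k : ℕ} {T : Fin k → BB} (hT : IsTab1 k T) (a : ℂˣ)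
    (p p' : Fin k) (hpp : (p : ℕ) < (p' : ℕ)) (lb : Fin 2 × ℂˣ)
    (h1 : 0 < (box q (T p) (a * q ^ (2 * (p : ℕ)))) lb)
    (h2 : 0 < (box q (T p') (a * q ^ (2 * (p' : ℕ)))) lb) : False := by
  have hr : (T p).rank ≤ (T p').rank := by
    have := rank_mono hT (p' : ℕ) p'.2 (p : ℕ) (le_of_lt hpp)
    simpa using this
  rcases box_pos q a (T p) (p : ℕ) lb h1 with ⟨m, e, he, hs, hl, hv⟩ | ⟨m, hs, hl, hv⟩ <;>
    rcases box_pos q a (T p') (p' : ℕ) lb h2 with ⟨m', e', he', hs', hl', hv'⟩ | ⟨m', hs', hl', hv'⟩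
  · obtain ⟨hm, hef⟩ := key_inj q hq a he he' (hv.symm.trans hv')
    rcases hs with ⟨hA,hm1,he1⟩|⟨hA,hm1,he1|he1⟩|⟨hA,hm1,he1⟩|⟨hA,hm1,he1⟩|⟨hA,hm1,he1⟩ <;>
      rcases hs' with ⟨hA',hm1',he1'⟩|⟨hA',hm1',he1'|he1'⟩|⟨hA',hm1',he1'⟩|⟨hA',hm1',he1'⟩|⟨hA',hm1',he1'⟩ <;>
      rw [hA, hA'] at hr <;> simp only [BB.rank] at hr <;> omega
  · exact absurd (hl.symm.trans hl') (by decide)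
  · exact absurd (hl.symm.trans hl') (by decide)
  · have hm : m = m' :=
      q_pow_inj q hq m m' (mul_left_cancel₀ (pow_ne_zero 3 a.ne_zero) (hv.symm.trans hv'))
    rcases hs with ⟨hA,hm1⟩|⟨hA,hm1⟩ <;> rcases hs' with ⟨hA',hm1'⟩|⟨hA',hm1'⟩ <;>
      rw [hA, hA'] at hr <;> simp only [BB.rank] at hr <;> omega

/-- Every monomial `m^{(1)}_{T,a}` with `T ∈ Tab(1,k)` is thin: all its exponents
are at most `1`. -/
theorem m1_thin (q : ℂˣ) (hq : ∀ n : ℕ, 0 < n → (q : ℂ) ^ n ≠ 1)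
    (k : ℕ) (hk : 1 ≤ k) (T : Fin k → BB) (hT : IsTab1 k T) (a : ℂˣ) :
    ∀ lb : Fin 2 × ℂˣ, (m1 q T a) lb ≤ 1 := by
  intro lb
  rw [m1, Finsupp.finset_sum_apply]
  by_cases hex : ∃ p : Fin k, 0 < (box q (T p) (a * q ^ (2 * (p : ℕ)))) lb
  · obtain ⟨p₀, hp₀⟩ := hex
    calc ∑ p : Fin k, (box q (T p) (a * q ^ (2 * (p : ℕ)))) lb
        ≤ ∑ p : Fin k, (if p = p₀ then 1 else 0) := by
          apply Finset.sum_le_sum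
          intro p _
          by_cases hp : p = p₀
          · subst hp; simpa using box_le_one q (T p) _ lb
          · simp only [hp, if_false]
            by_contra hc
            push_neg at hc
            have hcpos : 0 < (box q (T p) (a * q ^ (2 * (p : ℕ)))) lb := hc
            have hne : (p : ℕ) ≠ (p₀ : ℕ) := fun h => hp (Fin.ext h)
            rcases lt_or_gt_of_ne hne with h | h
            · exact no_two_pos q hq hT a p p₀ h lb hcpos hp₀
            · exact no_two_pos q hq hT a p₀ p h lb hp₀ hcpos
      _ = 1 := by rw [Finset.sum_ite_eq']; simp
  · push_neg at hex
    exact le_trans (Finset.sum_nonpos fun p _ => hex p) zero_le_one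
end
end
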